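/- Let R be a commutative ring, let M and N be finitely generated projective R-modules, and let d ≥ 0. Then the natural R-linear map P^d(M, R) ⊗_R N → P^d(M, N), sending f ⊗ n to the polynomial law whose value at x ∈ M ⊗_R S is f_S(x) • (n ⊗ 1), is an isomorphism of R-modules. -/

import Mathlib

open TensorProduct

universe u

variable (R : Type u) [CommRing R]

/-- The type of families of functions `S ⊗[R] M → S ⊗[R] N`, one for each commutative
`R`-algebra `S` (no naturality required). -/
abbrev RawLaw (M N : Type u) [AddCommGroup M] [Module R M] [AddCommGroup N] [Module R N] :
    Type (u + 1) :=
  ∀ (S : Type u) [CommRing S] [Algebra R S], S ⊗[R] M → S ⊗[R] N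

variable (M N : Type u) [AddCommGroup M] [Module R M] [AddCommGroup N] [Module R N]

/-- Naturality: such a family is a polynomial law (in the sense of Roby) if it commutes
with the maps induced by every `R`-algebra homomorphism. -/
def IsPolyLaw (f : RawLaw R M N) : Prop :=
  ∀ (S S' : Type u) [CommRing S] [Algebra R S] [CommRing S'] [Algebra R S']
    (φ : S →ₐ[R] S') (x : S ⊗[R] M),
    LinearMap.rTensor N φ.toLinearMap (f S x) = f S' (LinearMap.rTensor M φ.toLinearMap x)

/-- Homogeneity of degree `d`. -/
def IsHomog (d : ℕ) (f : RawLaw R M N) : Prop :=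
  ∀ (S : Type u) [CommRing S] [Algebra R S] (s : S) (x : S ⊗[R] M),
    f S (s • x) = s ^ d • f S x

/-- The `R`-module `P^d(M, N)` of polynomial laws from `M` to `N` homogeneous of
degree `d`, as a submodule of the module of raw families. -/
noncomputable def polyLawHomog (d : ℕ) : Submodule R (RawLaw R M N) where
  carrier := {f | IsPolyLaw R M N f ∧ IsHomog R M N d f}
  add_mem' := by
    rintro f g ⟨hf1, hf2⟩ ⟨hg1, hg2⟩
    constructor
    · intro S S' _ _ _ _ φ x
      show LinearMap.rTensor N φ.toLinearMap (f S x + g S x)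
          = f S' (LinearMap.rTensor M φ.toLinearMap x) + g S' (LinearMap.rTensor M φ.toLinearMap x)
      rw [map_add, hf1 S S' φ x, hg1 S S' φ x]
    · intro S _ _ s xx
      show f S (s • xx) + g S (s • xx) = s ^ d • (f S xx + g S xx)
      rw [hf2 S s xx, hg2 S s xx, smul_add]
  zero_mem' := by
    constructor
    · intro S S' _ _ _ _ φ x
      show LinearMap.rTensor N φ.toLinearMap 0 = (0 : S' ⊗[R] N)
      rw [map_zero]
    · intro S _ _ s xx
      show (0 : S ⊗[R] N) = s ^ d • (0 : S ⊗[R] N)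
      rw [smul_zero]
  smul_mem' := by
    rintro r f ⟨hf1, hf2⟩
    constructor
    · intro S S' _ _ _ _ φ x
      show LinearMap.rTensor N φ.toLinearMap (r • f S x)
          = r • f S' (LinearMap.rTensor M φ.toLinearMap x)
      rw [map_smul, hf1 S S' φ x]
    · intro S _ _ s xx
      show r • f S (s • xx) = s ^ d • (r • f S xx)
      rw [hf2 S s xx, smul_comm]

/-!
STATEMENT 6: Let R be a commutative ring, let M and N be finitely generated projective
R-modules, and let d ≥ 0.  Then the natural R-linear map P^d(M, R) ⊗_R N → P^d(M, N),
sending f ⊗ n to the polynomial law whose value at x ∈ M ⊗_R S is f_S(x) • (n ⊗ 1),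
is an isomorphism of R-modules.  (Formalized: there is an `R`-linear map with these
values on pure tensors, it is injective, and its range is exactly `P^d(M, N)`.) -/

section Aux

variable {R M N}

lemma rid_smul (S : Type u) [CommRing S] [Algebra R S] (s : S) (z : S ⊗[R] R) :
    TensorProduct.rid R S (s • z) = s * TensorProduct.rid R S z := by
  induction z using TensorProduct.induction_on with
  | zero => simp
  | tmul a r => simp [TensorProduct.smul_tmul', Algebra.smul_def]; ring
  | add a b ha hb => simp [smul_add, ha, hb, mul_add]

lemma lTensor_smul {N' : Type u} [AddCommGroup N'] [Module R N'] (ℓ : N →ₗ[R] N')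
    (S : Type u) [CommRing S] [Algebra R S] (s : S) (z : S ⊗[R] N) :
    LinearMap.lTensor S ℓ (s • z) = s • LinearMap.lTensor S ℓ z := by
  induction z using TensorProduct.induction_on with
  | zero => simp
  | tmul a n => simp [TensorProduct.smul_tmul']
  | add a b ha hb => simp [smul_add, ha, hb]

/-- The basic raw law `x ↦ (rid (f S x)) • (1 ⊗ n)`. -/
noncomputable def rawOfScalar (f : polyLawHomog R M R d) (n : N) : RawLaw R M N :=
  fun S _ _ x => TensorProduct.rid R S (f.1 S x) • ((1 : S) ⊗ₜ[R] n)

lemma rawOfScalar_mem (d : ℕ) (f : polyLawHomog R M R d) (n : N) :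
    rawOfScalar (d := d) f n ∈ polyLawHomog R M N d := by
  obtain ⟨f, hf1, hf2⟩ := f
  constructor
  · intro S S' _ _ _ _ φ x
    show LinearMap.rTensor N φ.toLinearMap
        (TensorProduct.rid R S (f S x) • ((1 : S) ⊗ₜ[R] n)) = _
    rw [TensorProduct.smul_tmul', smul_eq_mul, mul_one, LinearMap.rTensor_tmul]
    have h1 : φ (TensorProduct.rid R S (f S x))
        = TensorProduct.rid R S' (f S' (LinearMap.rTensor M φ.toLinearMap x)) := by
      rw [← hf1 S S' φ x]
      induction (f S x) using TensorProduct.induction_on with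
      | zero => simp
      | tmul a r => simp [Algebra.smul_def]
      | add a b ha hb => simp [ha, hb]
    show φ (TensorProduct.rid R S (f S x)) ⊗ₜ[R] n = _
    rw [h1]
    show _ = TensorProduct.rid R S' (f S' (LinearMap.rTensor M φ.toLinearMap x)) • ((1:S') ⊗ₜ[R] n)
    rw [TensorProduct.smul_tmul', smul_eq_mul, mul_one]
  · intro S _ _ s x
    show TensorProduct.rid R S (f S (s • x)) • ((1 : S) ⊗ₜ[R] n) = _
    rw [hf2 S s x, rid_smul, ← smul_eq_mul, smul_assoc]
    rfl

/-- Evaluation of a raw law at a point, as a linear map. -/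
def evalAt (S : Type u) [CommRing S] [Algebra R S] (x : S ⊗[R] M) :
    RawLaw R M N →ₗ[R] S ⊗[R] N where
  toFun f := f S x
  map_add' _ _ := rfl
  map_smul' _ _ := rfl

@[simp] lemma evalAt_apply (S : Type u) [CommRing S] [Algebra R S] (x : S ⊗[R] M)
    (f : RawLaw R M N) : evalAt S x f = f S x := rfl

/-- The bilinear map underlying `Φ`. -/
noncomputable def lawBil (d : ℕ) : polyLawHomog R M R d →ₗ[R] N →ₗ[R] RawLaw R M N where
  toFun f :=
    { toFun := fun n => rawOfScalar f n
      map_add' := by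
        intro a b
        funext S _ _ x
        show TensorProduct.rid R S (f.1 S x) • ((1 : S) ⊗ₜ[R] (a + b))
          = TensorProduct.rid R S (f.1 S x) • ((1:S) ⊗ₜ[R] a)
            + TensorProduct.rid R S (f.1 S x) • ((1:S) ⊗ₜ[R] b)
        rw [TensorProduct.tmul_add, smul_add]
      map_smul' := by
        intro r a
        funext S _ _ x
        show TensorProduct.rid R S (f.1 S x) • ((1 : S) ⊗ₜ[R] (r • a))
          = r • (TensorProduct.rid R S (f.1 S x) • ((1:S) ⊗ₜ[R] a))
        rw [TensorProduct.tmul_smul, smul_comm] }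
  map_add' := by
    intro f g
    apply LinearMap.ext; intro n
    funext S _ _ x
    show TensorProduct.rid R S ((f.1 + g.1) S x) • ((1 : S) ⊗ₜ[R] n) = _
    show TensorProduct.rid R S (f.1 S x + g.1 S x) • ((1 : S) ⊗ₜ[R] n)
      = TensorProduct.rid R S (f.1 S x) • ((1:S) ⊗ₜ[R] n)
        + TensorProduct.rid R S (g.1 S x) • ((1:S) ⊗ₜ[R] n)
    rw [map_add, add_smul]
  map_smul' := by
    intro r f
    apply LinearMap.ext; intro n
    funext S _ _ x
    show TensorProduct.rid R S ((r • f.1) S x) • ((1 : S) ⊗ₜ[R] n) = _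
    show TensorProduct.rid R S (r • f.1 S x) • ((1 : S) ⊗ₜ[R] n)
      = r • (TensorProduct.rid R S (f.1 S x) • ((1:S) ⊗ₜ[R] n))
    rw [map_smul, smul_assoc]

end Aux


set_option maxHeartbeats 1000000 in
set_option synthInstance.maxHeartbeats 400000 in
theorem stmt_6 [Module.Finite R M] [Module.Projective R M]
    [Module.Finite R N] [Module.Projective R N] (d : ℕ) :
    ∃ Φ : (polyLawHomog R M R d) ⊗[R] N →ₗ[R] RawLaw R M N,
      (∀ (f : polyLawHomog R M R d) (nn : N)
        (S : Type u) [CommRing S] [Algebra R S] (x : S ⊗[R] M),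
        Φ (f ⊗ₜ[R] nn) S x
          = (TensorProduct.rid R S (f.1 S x)) • ((1 : S) ⊗ₜ[R] nn)) ∧
      Function.Injective Φ ∧
      Set.range Φ = ↑(polyLawHomog R M N d) := by
  classical
  set Φ : (polyLawHomog R M R d) ⊗[R] N →ₗ[R] RawLaw R M N :=
    TensorProduct.lift (lawBil (R := R) (M := M) (N := N) d) with hΦ
  have hform : ∀ (f : polyLawHomog R M R d) (nn : N)
      (S : Type u) [CommRing S] [Algebra R S] (x : S ⊗[R] M),
      Φ (f ⊗ₜ[R] nn) S x
        = (TensorProduct.rid R S (f.1 S x)) • ((1 : S) ⊗ₜ[R] nn) := by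
    intro f nn S _ _ x
    rw [hΦ, TensorProduct.lift.tmul]
    rfl
  refine ⟨Φ, hform, ?_, ?_⟩
  · -- injectivity
    obtain ⟨k, m, hm⟩ := Module.Finite.exists_fin (R := R) (M := M)
    set S₀ := MvPolynomial (Fin k) R with hS₀
    set ξ : S₀ ⊗[R] M := ∑ i, MvPolynomial.X i ⊗ₜ[R] m i with hξ
    have hgen : ∀ (S : Type u) [CommRing S] [Algebra R S] (x : S ⊗[R] M),
        ∃ s : Fin k → S, x = ∑ i, s i ⊗ₜ[R] m i := by
      intro S _ _ x
      induction x using TensorProduct.induction_on with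
      | zero => exact ⟨0, by simp⟩
      | tmul t y =>
        have hy : y ∈ Submodule.span R (Set.range m) := hm ▸ Submodule.mem_top
        obtain ⟨c, hc⟩ := (Submodule.mem_span_range_iff_exists_fun R).1 hy
        refine ⟨fun i => c i • t, ?_⟩
        rw [← hc, TensorProduct.tmul_sum]
        congr 1
        funext i
        rw [TensorProduct.tmul_smul, TensorProduct.smul_tmul']
      | add a b ha hb =>
        obtain ⟨s, rfl⟩ := ha
        obtain ⟨s', rfl⟩ := hb
        refine ⟨s + s', ?_⟩
        rw [← Finset.sum_add_distrib]
        congr 1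
        funext i
        rw [Pi.add_apply, TensorProduct.add_tmul]
    set ev : polyLawHomog R M R d →ₗ[R] S₀ :=
      (TensorProduct.rid R S₀).toLinearMap ∘ₗ (evalAt S₀ ξ)
        ∘ₗ (polyLawHomog R M R d).subtype with hev_def
    have hev : Function.Injective ev := by
      rw [injective_iff_map_eq_zero]
      intro f hf0
      have h0 : f.1 S₀ ξ = 0 := by
        apply (TensorProduct.rid R S₀).injective
        simpa [hev_def] using hf0
      apply Subtype.ext
      funext S iS iA x
      obtain ⟨s, rfl⟩ := hgen S x
      set φ : S₀ →ₐ[R] S := MvPolynomial.aeval s with hφ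
      have hξφ : LinearMap.rTensor M φ.toLinearMap ξ = ∑ i, s i ⊗ₜ[R] m i := by
        rw [hξ, map_sum]
        congr 1
        funext i
        rw [LinearMap.rTensor_tmul]
        show (MvPolynomial.aeval s) (MvPolynomial.X i) ⊗ₜ[R] m i = s i ⊗ₜ[R] m i
        rw [MvPolynomial.aeval_X]
      calc f.1 S (∑ i, s i ⊗ₜ[R] m i)
          = f.1 S (LinearMap.rTensor M φ.toLinearMap ξ) := by rw [hξφ]
        _ = LinearMap.rTensor R φ.toLinearMap (f.1 S₀ ξ) := (f.2.1 S₀ S φ ξ).symm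
        _ = 0 := by rw [h0, map_zero]
    have hψ : Function.Injective (LinearMap.rTensor N ev) :=
      Module.Flat.rTensor_preserves_injective_linearMap ev hev
    have hcomm : (evalAt (R := R) (M := M) (N := N) S₀ ξ) ∘ₗ Φ
        = LinearMap.rTensor N ev := by
      apply TensorProduct.ext'
      intro f n
      rw [LinearMap.comp_apply, LinearMap.rTensor_tmul, evalAt_apply,
        hform f n S₀ ξ, TensorProduct.smul_tmul', smul_eq_mul, mul_one]
      rfl
    intro t t' h
    apply hψ
    rw [← hcomm]
    simp only [LinearMap.comp_apply, evalAt_apply, h]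
  · -- range
    ext g
    constructor
    · rintro ⟨t, rfl⟩
      show Φ t ∈ polyLawHomog R M N d
      induction t using TensorProduct.induction_on with
      | zero => rw [map_zero]; exact Submodule.zero_mem _
      | tmul f n =>
        have h : Φ (f ⊗ₜ[R] n) = rawOfScalar f n := by
          rw [hΦ, TensorProduct.lift.tmul]; rfl
        rw [h]
        exact rawOfScalar_mem d f n
      | add a b ha hb => rw [map_add]; exact Submodule.add_mem _ ha hb
    · intro hg
      obtain ⟨hg1, hg2⟩ := hg
      obtain ⟨nN, π, hπ⟩ := Module.Finite.exists_fin' R N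
      obtain ⟨σ, hσ⟩ := π.exists_rightInverse_of_surjective
        (LinearMap.range_eq_top.2 hπ)
      set ℓ : Fin nN → (N →ₗ[R] R) := fun j => (LinearMap.proj j) ∘ₗ σ with hℓ
      set e : Fin nN → N := fun j => π (Pi.single j 1) with he
      have hrecon : ∀ y : N, ∑ j, ℓ j y • e j = y := by
        intro y
        have h1 : ∀ j, ℓ j y • e j = π (Pi.single j (σ y j)) := by
          intro j
          rw [he, ← map_smul]
          congr 1
          rw [← Pi.single_smul, smul_eq_mul, mul_one]
          rfl
        rw [Finset.sum_congr rfl fun j _ => h1 j, ← map_sum,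
          Finset.univ_sum_single]
        exact LinearMap.congr_fun hσ y
      set fj : Fin nN → RawLaw R M R :=
        fun j => fun S _ _ x => LinearMap.lTensor S (ℓ j) (g S x) with hfj_def
      have hfj : ∀ j, fj j ∈ polyLawHomog R M R d := by
        intro j
        constructor
        · intro S S' _ _ _ _ φ x
          show LinearMap.rTensor R φ.toLinearMap
              (LinearMap.lTensor S (ℓ j) (g S x))
            = LinearMap.lTensor S' (ℓ j) (g S' (LinearMap.rTensor M φ.toLinearMap x))
          rw [← hg1 S S' φ x]
          induction (g S x) using TensorProduct.induction_on with
          | zero => simp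
          | tmul a y => simp
          | add a b ha hb => simp only [map_add, ha, hb]
        · intro S _ _ s x
          show LinearMap.lTensor S (ℓ j) (g S (s • x))
            = s ^ d • LinearMap.lTensor S (ℓ j) (g S x)
          rw [hg2 S s x, lTensor_smul]
      have key : ∀ (S : Type u) [CommRing S] [Algebra R S] (z : S ⊗[R] N),
          ∑ j, TensorProduct.rid R S (LinearMap.lTensor S (ℓ j) z)
            • ((1 : S) ⊗ₜ[R] e j) = z := by
        intro S _ _ z
        induction z using TensorProduct.induction_on with
        | zero => simp
        | tmul s y =>
          have h1 : ∀ j, TensorProduct.rid R S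
              (LinearMap.lTensor S (ℓ j) (s ⊗ₜ[R] y)) • ((1 : S) ⊗ₜ[R] e j)
              = s ⊗ₜ[R] (ℓ j y • e j) := by
            intro j
            rw [LinearMap.lTensor_tmul, TensorProduct.rid_tmul,
              TensorProduct.smul_tmul', smul_eq_mul, mul_one]
            exact TensorProduct.smul_tmul _ _ _
          rw [Finset.sum_congr rfl fun j _ => h1 j, ← TensorProduct.tmul_sum,
            hrecon y]
        | add a b ha hb =>
          have h3 : ∀ j, TensorProduct.rid R S
              (LinearMap.lTensor S (ℓ j) (a + b)) • ((1 : S) ⊗ₜ[R] e j)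
              = TensorProduct.rid R S (LinearMap.lTensor S (ℓ j) a)
                  • ((1 : S) ⊗ₜ[R] e j)
                + TensorProduct.rid R S (LinearMap.lTensor S (ℓ j) b)
                  • ((1 : S) ⊗ₜ[R] e j) := by
            intro j
            rw [map_add, map_add, add_smul]
          rw [Finset.sum_congr rfl fun j _ => h3 j, Finset.sum_add_distrib,
            ha, hb]
      refine ⟨∑ j, (⟨fj j, hfj j⟩ : polyLawHomog R M R d) ⊗ₜ[R] e j, ?_⟩
      show Φ _ = g
      funext S iS iA x
      have hsum : Φ (∑ j, (⟨fj j, hfj j⟩ : polyLawHomog R M R d) ⊗ₜ[R] e j) S x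
          = ∑ j, Φ ((⟨fj j, hfj j⟩ : polyLawHomog R M R d) ⊗ₜ[R] e j) S x := by
        have := map_sum ((evalAt (R := R) (M := M) (N := N) S x) ∘ₗ Φ)
          (fun j => (⟨fj j, hfj j⟩ : polyLawHomog R M R d) ⊗ₜ[R] e j) Finset.univ
        simp only [LinearMap.comp_apply, evalAt_apply] at this
        exact this
      rw [hsum]
      have h2 : ∀ j, Φ ((⟨fj j, hfj j⟩ : polyLawHomog R M R d) ⊗ₜ[R] e j) S x
          = TensorProduct.rid R S (LinearMap.lTensor S (ℓ j) (g S x))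
            • ((1 : S) ⊗ₜ[R] e j) := by
        intro j
        rw [hform]
      rw [Finset.sum_congr rfl fun j _ => h2 j]
      exact key S (g S x)
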